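/- arXiv:0910.2083 — 3 statements merged into one kernel-verified Lean document; each statement's English description precedes it below -/
import Mathlib

section
/- The formal power series solution f of the ODE x^3 f'(x) = (1+3x^2) f(x) - x^6 is unique: there is exactly one formal power series f ∈ ℂ[[x]] satisfying x^3 f' = (1+3x^2) f - x^6. -/
open PowerSeries

private def aSeq : ℕ → ℂ
  | 0 => 0
  | 1 => 0
  | (n + 2) => ((n : ℂ) - 3) * aSeq n + (if n = 4 then 1 else 0)

private lemma lhs_coeff (f : ℂ⟦X⟧) (n : ℕ) :
    (coeff (n + 3)) ((X : ℂ⟦X⟧) ^ 3 * (PowerSeries.derivative ℂ) f)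
      = coeff (n + 1) f * (n + 1) := by
  rw [coeff_X_pow_mul']
  simp [coeff_derivative]

private lemma lhs_coeff_small (f : ℂ⟦X⟧) (n : ℕ) (hn : n < 3) :
    (coeff n) ((X : ℂ⟦X⟧) ^ 3 * (PowerSeries.derivative ℂ) f) = 0 := by
  rw [coeff_X_pow_mul', if_neg (by omega)]

private lemma rhs_coeff (f : ℂ⟦X⟧) (n : ℕ) :
    (coeff n) ((1 + 3 * X ^ 2) * f - (X : ℂ⟦X⟧) ^ 6) =
      coeff n f + 3 * (if 2 ≤ n then coeff (n - 2) f else 0)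
        - (if n = 6 then 1 else 0) := by
  rw [show (3 : ℂ⟦X⟧) = C (3 : ℂ) from (map_ofNat (C (R := ℂ)) 3).symm]
  simp [add_mul, mul_assoc, coeff_X_pow_mul', coeff_X_pow, coeff_C_mul, mul_ite]

private lemma ode_iff (f : ℂ⟦X⟧) :
    (X : ℂ⟦X⟧) ^ 3 * PowerSeries.derivative ℂ f = (1 + 3 * X ^ 2) * f - X ^ 6 ↔
      (coeff 0 f = 0 ∧ coeff 1 f = 0 ∧
        ∀ m, coeff (m + 2) f
          = ((m : ℂ) - 3) * coeff m f + (if m = 4 then 1 else 0)) := by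
  rw [PowerSeries.ext_iff]
  constructor
  · intro h
    refine ⟨?_, ?_, ?_⟩
    · have h0 := h 0
      rw [lhs_coeff_small f 0 (by omega), rhs_coeff] at h0
      simpa using h0.symm
    · have h1 := h 1
      rw [lhs_coeff_small f 1 (by omega), rhs_coeff] at h1
      simpa using h1.symm
    · intro m
      match m with
      | 0 =>
        have h2 := h 2
        rw [lhs_coeff_small f 2 (by omega), rhs_coeff] at h2
        simp at h2 ⊢
        linear_combination -h2
      | (k + 1) =>
        have h3 := h (k + 3)
        rw [lhs_coeff, rhs_coeff, if_pos (by omega : 2 ≤ k + 3),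
          (by omega : k + 3 - 2 = k + 1)] at h3
        show (coeff (k + 3)) f = _
        push_cast
        by_cases hk : k = 3
        · subst hk; norm_num at h3 ⊢; linear_combination -h3
        · rw [if_neg (show ¬(k + 3 = 6) by omega)] at h3
          rw [if_neg hk]
          linear_combination -h3
  · rintro ⟨h0, h1, h2⟩ n
    match n with
    | 0 =>
      rw [lhs_coeff_small f 0 (by omega), rhs_coeff]
      simp [h0]
    | 1 =>
      rw [lhs_coeff_small f 1 (by omega), rhs_coeff]
      simp [h1]
    | 2 =>
      rw [lhs_coeff_small f 2 (by omega), rhs_coeff]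
      have := h2 0
      simp [h0] at this ⊢
      simp [this, h0]
    | (k + 3) =>
      rw [lhs_coeff, rhs_coeff, if_pos (by omega : 2 ≤ k + 3),
        (by omega : k + 3 - 2 = k + 1)]
      have h3 := h2 (k + 1)
      rw [show k + 1 + 2 = k + 3 from rfl] at h3
      push_cast at h3 ⊢
      by_cases hk : k = 3
      · subst hk; norm_num at h3 ⊢; linear_combination -h3
      · rw [if_neg hk] at h3
        rw [if_neg hk]
        linear_combination -h3

/-- The formal power series solution of `x^3 f' = (1+3x^2) f - x^6` is unique. -/
theorem stmt_0 :
    ∃! f : PowerSeries ℂ,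
      (X : ℂ⟦X⟧) ^ 3 * PowerSeries.derivative ℂ f
        = (1 + 3 * X ^ 2) * f - X ^ 6 := by
  refine ⟨PowerSeries.mk aSeq, ?_, ?_⟩
  · exact (ode_iff (PowerSeries.mk aSeq)).mpr
      ⟨by simp [aSeq], by simp [aSeq], fun m => by simp [aSeq]⟩
  · intro g hg
    rw [ode_iff] at hg
    obtain ⟨h0, h1, h2⟩ := hg
    ext n
    rw [coeff_mk]
    induction n using Nat.strong_induction_on with
    | _ n ih =>
      match n with
      | 0 => simpa [aSeq] using h0
      | 1 => simpa [aSeq] using h1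
      | (k + 2) =>
        rw [h2 k, aSeq, ih k (by omega)]
end

section
/- The unique formal power series solution of x^3 f'(x) = (1+3x^2) f(x) - x^6 is divergent, i.e., it has radius of convergence 0. -/
open PowerSeries

/-- The unique formal power series solution of `x^3 f' = (1+3x^2) f - x^6` is
divergent: it has radius of convergence `0`, i.e. for every positive real `r`
the series `∑ ‖a_n‖ r^n` diverges. -/
theorem stmt_1 (f : PowerSeries ℂ)
    (hf : (X : ℂ⟦X⟧) ^ 3 * PowerSeries.derivative ℂ f
        = (1 + 3 * X ^ 2) * f - X ^ 6) :
    ∀ r : ℝ, 0 < r → ¬ Summable (fun n : ℕ => ‖PowerSeries.coeff n f‖ * r ^ n) := by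
  have hc : ∀ n : ℕ,
      (if 3 ≤ n then (coeff (n - 3)) (derivative ℂ f) else 0)
        = coeff n f + 3 * (if 2 ≤ n then coeff (n - 2) f else 0)
          - (if n = 6 then (1 : ℂ) else 0) := by
    intro n
    have h := congrArg (coeff n) hf
    rw [mul_comm ((X : ℂ⟦X⟧) ^ 3)] at h
    rw [PowerSeries.coeff_mul_X_pow'] at h
    rw [h]
    have h2 : ((1 : ℂ⟦X⟧) + 3 * X ^ 2) * f = f + 3 * (f * X ^ 2) := by ring
    rw [map_sub, h2, map_add, PowerSeries.coeff_X_pow]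
    have h3 : (coeff n) (3 * (f * X ^ 2)) = 3 * (coeff n) (f * X ^ 2) := by
      rw [show (3 : ℂ⟦X⟧) = C (3 : ℂ) from (map_ofNat C 3).symm, PowerSeries.coeff_C_mul]
    rw [h3, PowerSeries.coeff_mul_X_pow']
  -- small coefficients
  have h0 : coeff 0 f = 0 := by have := hc 0; simpa using this.symm
  have h2 : coeff 2 f = 0 := by have := hc 2; simp [h0] at this; simpa using this.symm
  have h4 : coeff 4 f = 0 := by
    have := hc 4
    simp [PowerSeries.coeff_derivative, h2] at this
    simpa using this.symm
  have h6 : coeff 6 f = 1 := by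
    have := hc 6
    simp [PowerSeries.coeff_derivative, h4] at this
    linear_combination -this
  have hrec : ∀ m : ℕ, coeff (m + 7) f = ((m : ℂ) + 2) * coeff (m + 5) f := by
    intro m
    have := hc (m + 7)
    have e1 : m + 7 - 3 = m + 4 := by omega
    have e2 : m + 7 - 2 = m + 5 := by omega
    have e3 : ¬ (m + 7 = 6) := by omega
    rw [e1, e2, if_pos (by omega), if_pos (by omega), if_neg e3,
      PowerSeries.coeff_derivative] at this
    push_cast at this
    linear_combination -this
  -- norms grow factorially on even indices
  have hgrow : ∀ k : ℕ, (k.factorial : ℝ) ≤ ‖coeff (2 * k + 6) f‖ := by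
    intro k
    induction k with
    | zero => simp [h6]
    | succ k ih =>
      have e : 2 * (k + 1) + 6 = (2 * k + 1) + 7 := by omega
      rw [e, hrec (2 * k + 1)]
      have e2 : (2 * k + 1) + 5 = 2 * k + 6 := by omega
      rw [e2, norm_mul]
      have hn : ‖((2 * k + 1 : ℕ) : ℂ) + 2‖ = (2 * k + 3 : ℝ) := by
        rw [show (((2 * k + 1 : ℕ) : ℂ) + 2) = ((2 * k + 3 : ℕ) : ℂ) by push_cast; ring,
          Complex.norm_natCast]
        push_cast; ring
      rw [hn]
      calc ((k + 1).factorial : ℝ) = (k + 1) * k.factorial := by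
            push_cast [Nat.factorial_succ]; ring
        _ ≤ (2 * k + 3) * ‖coeff (2 * k + 6) f‖ := by
            apply mul_le_mul (by push_cast; linarith) ih (by positivity) (by positivity)
  intro r hr hs
  have htend := hs.tendsto_atTop_zero
  have hsub : Filter.Tendsto (fun k : ℕ => ‖coeff (2 * k + 6) f‖ * r ^ (2 * k + 6))
      Filter.atTop (nhds 0) := by
    apply htend.comp
    apply Filter.tendsto_atTop_atTop.2
    intro b; exact ⟨b, fun a ha => by omega⟩
  -- eventually k! r^{2k} ≥ 1
  have hx : Filter.Tendsto (fun k : ℕ => (1 / r ^ 2) ^ k / (k.factorial : ℝ))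
      Filter.atTop (nhds 0) := (Real.summable_pow_div_factorial _).tendsto_atTop_zero
  have hev : ∀ᶠ k : ℕ in Filter.atTop, (1 / r ^ 2) ^ k / (k.factorial : ℝ) ≤ 1 := by
    have := hx.eventually_lt_const (by norm_num : (0:ℝ) < 1)
    exact this.mono fun k hk => le_of_lt hk
  have hge : ∀ᶠ k : ℕ in Filter.atTop,
      r ^ 6 ≤ ‖coeff (2 * k + 6) f‖ * r ^ (2 * k + 6) := by
    refine hev.mono fun k hk => ?_
    have hfac : (1 / r ^ 2) ^ k ≤ (k.factorial : ℝ) := by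
      rw [div_le_one (by positivity)] at hk
      exact hk
    have h1 : (1 : ℝ) ≤ (k.factorial : ℝ) * r ^ (2 * k) := by
      have : (1 / r ^ 2) ^ k * r ^ (2 * k) = 1 := by
        rw [div_pow, one_pow, pow_mul]
        field_simp
      calc (1 : ℝ) = (1 / r ^ 2) ^ k * r ^ (2 * k) := this.symm
        _ ≤ (k.factorial : ℝ) * r ^ (2 * k) := by
            apply mul_le_mul_of_nonneg_right hfac (by positivity)
    calc r ^ 6 = 1 * r ^ 6 := (one_mul _).symm
      _ ≤ ((k.factorial : ℝ) * r ^ (2 * k)) * r ^ 6 := by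
          apply mul_le_mul_of_nonneg_right h1 (by positivity)
      _ = (k.factorial : ℝ) * r ^ (2 * k + 6) := by ring
      _ ≤ ‖coeff (2 * k + 6) f‖ * r ^ (2 * k + 6) := by
          apply mul_le_mul_of_nonneg_right (hgrow k) (by positivity)
  have : r ^ 6 ≤ 0 := ge_of_tendsto hsub hge
  have : (0:ℝ) < r ^ 6 := by positivity
  linarith
end

section
/- The function x ↦ x·(1 - 2x² log w)^{-1/2}, for fixed w with |w - 1| < 1/5 and x in the closed unit disc, satisfies |x(1-2x² log w)^{-1/2} - x| ≤ A|x|³ for some absolute constant A > 0 (e.g., A = 1 works), where the principal branches of log and square root are used. -/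
open Complex Real


set_option maxHeartbeats 800000 in
lemma key {u : ℂ} (hu : ‖u‖ ≤ 1/2) :
    ‖(1 - u) ^ (-(1/2) : ℂ) - 1‖ ≤ ‖u‖ := by
  set z : ℂ := 1 - u with hzdef
  have hre : (1/2 : ℝ) ≤ z.re := by
    have : u.re ≤ ‖u‖ := Complex.re_le_norm u
    simp only [hzdef, Complex.sub_re, Complex.one_re]
    linarith
  have hrepos : 0 < z.re := by linarith
  have hz : z ≠ 0 := by
    intro h; rw [h] at hrepos; simp at hrepos
  set s : ℂ := z ^ ((1/2 : ℂ)) with hsdef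
  clear_value s
  have hs2 : s * s = z := by
    rw [hsdef, ← Complex.cpow_add _ _ hz]
    norm_num
  have hsne : s ≠ 0 := by
    intro h; apply hz; rw [← hs2, h, mul_zero]
  have habs2 : (‖s‖) ^ 2 = ‖z‖ := by
    calc (‖s‖) ^ 2 = ‖s * s‖ := by rw [norm_mul]; ring
    _ = ‖z‖ := by rw [hs2]
  have hzabs : (1/2 : ℝ) ≤ ‖z‖ := le_trans hre (Complex.re_le_norm z)
  have hsexp : s = Complex.exp (Complex.log z * (1/2)) := by
    rw [hsdef, Complex.cpow_def_of_ne_zero hz]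
  have harg : |z.arg| < π / 2 := Complex.abs_arg_lt_pi_div_two_iff.mpr (Or.inl hrepos)
  have him : (Complex.log z * (1/2)).im = z.arg / 2 := by
    simp [Complex.mul_im, Complex.log_im, Complex.log_re]
    ring
  have hexpre : Real.exp ((Complex.log z * (1/2)).re) = ‖s‖ := by
    rw [hsexp, Complex.norm_exp]
  have hcos : Real.sqrt 2 / 2 ≤ Real.cos (z.arg / 2) := by
    have h1 : |z.arg / 2| ≤ π / 4 := by
      rw [abs_div, _root_.abs_two]
      linarith [abs_nonneg z.arg, pi_pos]
    have h2 : Real.cos (π/4) ≤ Real.cos (|z.arg / 2|) := by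
      apply Real.cos_le_cos_of_nonneg_of_le_pi (abs_nonneg _) (by linarith [pi_pos]) h1
    rw [Real.cos_pi_div_four] at h2
    rwa [Real.cos_abs] at h2
  have hsrecos : s.re = ‖s‖ * Real.cos (z.arg / 2) := by
    conv_lhs => rw [hsexp]
    rw [Complex.exp_re, him, hexpre]
  have hsre : Real.sqrt 2 / 2 * ‖s‖ ≤ s.re := by
    rw [hsrecos]
    have := mul_le_mul_of_nonneg_left hcos (norm_nonneg s)
    linarith [this]
  have habs1s : (‖1 + s‖) ^ 2 = 1 + 2 * s.re + (‖s‖) ^ 2 := by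
    rw [Complex.sq_norm, Complex.sq_norm, Complex.normSq_apply, Complex.normSq_apply]
    simp [Complex.add_re, Complex.add_im]
    ring
  set b := ‖s‖ with hb
  set t := ‖1 + s‖ with ht
  clear_value b t
  have hbnn : 0 ≤ b := hb ▸ norm_nonneg s
  have htnn : 0 ≤ t := ht ▸ norm_nonneg _
  have hb2 : (1/2 : ℝ) ≤ b ^ 2 := by rw [habs2]; exact hzabs
  have hr2 : Real.sqrt 2 ^ 2 = 2 := Real.sq_sqrt (by norm_num)
  have hrnn : 0 ≤ Real.sqrt 2 := Real.sqrt_nonneg 2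
  have h1 : 1 + Real.sqrt 2 * b + b^2 ≤ t^2 := by
    rw [habs1s]; nlinarith [hsre]
  have hbr : Real.sqrt 2 / 2 ≤ b := by nlinarith
  have hb3 : Real.sqrt 2 / 4 ≤ b^3 := by
    nlinarith [mul_le_mul hbr hb2 (by norm_num : (0:ℝ) ≤ 1/2) hbnn]
  have e1 : b^2 * (1 + Real.sqrt 2 * b + b^2) ≤ b^2 * t^2 :=
    mul_le_mul_of_nonneg_left h1 (sq_nonneg b)
  have e2 : (1:ℝ) ≤ b^2 * (1 + Real.sqrt 2 * b + b^2) := by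
    nlinarith [mul_le_mul_of_nonneg_left hb3 hrnn, sq_nonneg (b^2)]
  have hsq : 1 ≤ (b*t)^2 := by
    calc (1:ℝ) ≤ b^2 * t^2 := le_trans e2 e1
    _ = (b*t)^2 := by ring
  have hprod : 1 ≤ b * t := by
    nlinarith [mul_nonneg hbnn htnn]
  have h1sne : (1 : ℂ) + s ≠ 0 := by
    intro h
    have h0 : t = 0 := by rw [ht, h, norm_zero]
    rw [h0, mul_zero] at hprod; linarith
  have hneg : z ^ (-(1/2) : ℂ) = s⁻¹ := by
    rw [hsdef, ← Complex.cpow_neg]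
  have hid : z ^ (-(1/2) : ℂ) - 1 = u / (s * (1 + s)) := by
    rw [hneg, eq_div_iff (mul_ne_zero hsne h1sne)]
    field_simp
    linear_combination (-1 : ℂ) * hs2 + (-1 : ℂ) * hzdef
  rw [hid, norm_div, norm_mul, ← hb, ← ht]
  exact div_le_self (norm_nonneg u) hprod


/-- There is a constant `A > 0` (e.g. `A = 1`) such that for every `w` with
`|w - 1| < 1/5` and every `x` in the closed unit disc,
`|x·(1 - 2x² log w)^{-1/2} - x| ≤ A|x|³`, using principal branches of `log`
and of the power. -/
theorem stmt_18 :
    ∃ A : ℝ, 0 < A ∧ A = 1 ∧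
      ∀ w : ℂ, ‖w - 1‖ < 1 / 5 →
        ∀ x : ℂ, ‖x‖ ≤ 1 →
          ‖x * (1 - 2 * x ^ 2 * Complex.log w) ^ (-(1 / 2) : ℂ) - x‖
            ≤ A * ‖x‖ ^ 3 := by
  refine ⟨1, one_pos, rfl, fun w hw x hx => ?_⟩
  have hw1 : ‖w - 1‖ < 1 := by linarith
  have hlog : ‖Complex.log w‖ ≤ 9/40 := by
    have h := Complex.norm_log_one_add_le hw1
    rw [add_sub_cancel] at h
    set r := ‖w - 1‖ with hr
    have hr0 : 0 ≤ r := hr ▸ norm_nonneg _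
    have hinv : (1 - r)⁻¹ ≤ (4/5 : ℝ)⁻¹ := by
      apply inv_anti₀ (by norm_num) (by linarith)
    have h2 : r^2 * (1-r)⁻¹ / 2 ≤ (1/5)^2 * (5/4) / 2 := by
      have : r^2 * (1-r)⁻¹ ≤ (1/5)^2 * (5/4) := by
        apply mul_le_mul (by nlinarith) (by norm_num at hinv ⊢; linarith)
          (by rw [inv_nonneg]; linarith) (by norm_num)
      linarith
    calc ‖Complex.log w‖ ≤ r^2 * (1-r)⁻¹/2 + r := h
    _ ≤ (1/5)^2 * (5/4)/2 + 1/5 := by linarith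
    _ = 9/40 := by norm_num
  have hxn : 0 ≤ ‖x‖ := norm_nonneg x
  have hln : 0 ≤ ‖Complex.log w‖ := norm_nonneg _
  have hu : ‖2 * x^2 * Complex.log w‖ ≤ 1/2 := by
    rw [norm_mul, norm_mul, norm_pow, Complex.norm_two]
    nlinarith
  have hkey := key hu
  have heq : x * (1 - 2*x^2*Complex.log w) ^ (-(1/2):ℂ) - x
      = x * ((1 - 2*x^2*Complex.log w) ^ (-(1/2):ℂ) - 1) := by ring
  rw [heq, norm_mul]
  calc ‖x‖ * ‖(1 - 2*x^2*Complex.log w) ^ (-(1/2):ℂ) - 1‖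
      ≤ ‖x‖ * ‖2*x^2*Complex.log w‖ :=
        mul_le_mul_of_nonneg_left hkey hxn
    _ = 2 * ‖Complex.log w‖ * ‖x‖ ^ 3 := by
        rw [norm_mul, norm_mul, norm_pow, Complex.norm_two]; ring
    _ ≤ 1 * ‖x‖ ^ 3 := by
        nlinarith [pow_nonneg hxn 3]
end
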